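/- For any π₁, π₂ ∈ S_n, there exists 0 ≤ j < n such that inv(π₁·c_n^j·π₂^{-1}) ≤ (3n² − 4n + 1)/8. -/

import Mathlib

open Finset

def inversions {n : ℕ} (π : Equiv.Perm (Fin n)) : ℕ :=
  (Finset.univ.filter (fun p : Fin n × Fin n => p.1 < p.2 ∧ π p.2 < π p.1)).card

def winv {n : ℕ} (π : Equiv.Perm (Fin n)) : ℤ :=
  ∑ p ∈ Finset.univ.filter (fun p : Fin n × Fin n => p.1 < p.2 ∧ π p.2 < π p.1),
    ((π p.1 : ℤ) - (π p.2 : ℤ))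

def cwinv {n : ℕ} (π : Equiv.Perm (Fin n)) : ℤ :=
  n * inversions π - 2 * winv π

namespace DiamAux

variable {n : ℕ}
open Fin.NatCast Fin.CommRing

/-- the set of increasing pairs -/
abbrev PP (n : ℕ) : Finset (Fin n × Fin n) :=
  Finset.univ.filter (fun p : Fin n × Fin n => p.1 < p.2)

lemma swap_sum {M : Type*} [AddCommMonoid M] (g : Fin n × Fin n → M)
    (hg : ∀ a b : Fin n, g (a, b) = g (b, a)) :
    ∑ p ∈ PP n, g p
      = ∑ p ∈ Finset.univ.filter (fun p : Fin n × Fin n => p.2 < p.1), g p := by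
  refine Finset.sum_nbij' (fun p => p.swap) (fun p => p.swap) ?_ ?_ ?_ ?_ ?_
  · intro p hp; simp only [mem_filter, mem_univ, true_and] at hp ⊢; exact hp
  · intro p hp; simp only [mem_filter, mem_univ, true_and] at hp ⊢; exact hp
  · intro p _; exact Prod.swap_swap p
  · intro p _; exact Prod.swap_swap p
  · intro p _; exact (hg p.2 p.1).symm

lemma diag_sum {M : Type*} [AddCommMonoid M] (g : Fin n × Fin n → M) :
    ∑ p ∈ Finset.univ.filter (fun p : Fin n × Fin n => p.1 = p.2), g p
      = ∑ a : Fin n, g (a, a) := by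
  refine Finset.sum_nbij' (fun p => p.1) (fun a => (a, a)) ?_ ?_ ?_ ?_ ?_
  · intro p _; exact mem_univ _
  · intro a _; simp
  · intro p hp; simp only [mem_filter, mem_univ, true_and] at hp
    obtain ⟨a, b⟩ := p
    simp only at hp
    subst hp
    rfl
  · intro a _; rfl
  · intro p hp; simp only [mem_filter, mem_univ, true_and] at hp
    obtain ⟨a, b⟩ := p
    simp only at hp
    subst hp
    rfl

lemma split3 {M : Type*} [AddCommMonoid M] (g : Fin n × Fin n → M) :
    ∑ p : Fin n × Fin n, g p
      = (∑ p ∈ PP n, g p)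
        + (∑ p ∈ Finset.univ.filter (fun p : Fin n × Fin n => p.2 < p.1), g p)
        + ∑ a : Fin n, g (a, a) := by
  rw [← diag_sum g]
  rw [← Finset.sum_filter_add_sum_filter_not Finset.univ
      (fun p : Fin n × Fin n => p.1 < p.2) g]
  have h1 : (Finset.univ.filter (fun p : Fin n × Fin n => ¬ p.1 < p.2)).filter
      (fun p => p.2 < p.1) = Finset.univ.filter (fun p : Fin n × Fin n => p.2 < p.1) := by
    rw [Finset.filter_filter]
    apply Finset.filter_congr
    intro p _
    constructor
    · exact fun h => h.2
    · exact fun h => ⟨not_lt_of_gt h, h⟩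
  have h2 : (Finset.univ.filter (fun p : Fin n × Fin n => ¬ p.1 < p.2)).filter
      (fun p => ¬ p.2 < p.1) = Finset.univ.filter (fun p : Fin n × Fin n => p.1 = p.2) := by
    rw [Finset.filter_filter]
    apply Finset.filter_congr
    intro p _
    constructor
    · exact fun h => le_antisymm (not_lt.mp h.2) (not_lt.mp h.1)
    · exact fun h => ⟨by rw [h]; exact lt_irrefl _, by rw [h]; exact lt_irrefl _⟩
  rw [← Finset.sum_filter_add_sum_filter_not
      (Finset.univ.filter (fun p : Fin n × Fin n => ¬ p.1 < p.2))
      (fun p => p.2 < p.1) g, h1, h2, add_assoc]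

lemma pairs_symm_sum {M : Type*} [AddCommMonoid M] (g : Fin n × Fin n → M)
    (hg : ∀ a b : Fin n, g (a, b) = g (b, a)) :
    ∑ p : Fin n × Fin n, g p
      = (∑ p ∈ PP n, g p) + (∑ p ∈ PP n, g p) + ∑ a : Fin n, g (a, a) := by
  rw [split3 g, ← swap_sum g hg]

lemma perm_reindex (τ : Equiv.Perm (Fin n)) (g : Fin n × Fin n → ℤ)
    (hg : ∀ a b : Fin n, g (a, b) = g (b, a)) :
    ∑ p ∈ PP n, g (τ p.1, τ p.2) = ∑ p ∈ PP n, g p := by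
  have h1 := pairs_symm_sum (fun p : Fin n × Fin n => g (τ p.1, τ p.2))
    (fun a b => hg (τ a) (τ b))
  have h2 := pairs_symm_sum g hg
  have h3 : ∑ p : Fin n × Fin n, g (τ p.1, τ p.2) = ∑ p : Fin n × Fin n, g p :=
    Fintype.sum_equiv (τ.prodCongr τ) _ _ (fun p => rfl)
  have h4 : ∑ a : Fin n, g (τ a, τ a) = ∑ a : Fin n, g (a, a) :=
    Fintype.sum_equiv τ _ _ (fun a => rfl)
  simp only at h1 h2
  linarith

lemma sub_val₁ (a b : Fin n) (h : a < b) : (b - a).val = b.val - a.val := by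
  rw [Fin.sub_def]
  have h' : a.val < b.val := h
  have hb := b.isLt
  have ha := a.isLt
  simp only [Fin.val_mk]
  have e : (n - ↑a + ↑b) = (b.val - a.val) + n := by omega
  rw [e, Nat.add_mod_right]
  apply Nat.mod_eq_of_lt; omega

lemma sub_val₂ (a b : Fin n) (h : a < b) : (a - b).val = n - (b.val - a.val) := by
  rw [Fin.sub_def]
  have h' : a.val < b.val := h
  have hb := b.isLt
  have ha := a.isLt
  simp only [Fin.val_mk]
  have e : n - ↑b + ↑a = n - (b.val - a.val) := by omega
  rw [e]
  apply Nat.mod_eq_of_lt; omega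

lemma msum_step (N : ℕ) :
    ∑ d ∈ range (N+1), min d (N+1-d) = (∑ d ∈ range N, min d (N-d)) + (N - N/2) := by
  rw [Finset.sum_range_succ]
  have h : ∀ d ∈ range N, min d (N+1-d) = min d (N-d) + (if N < 2*d then 1 else 0) := by
    intro d hd
    simp only [mem_range] at hd
    split_ifs <;> omega
  rw [Finset.sum_congr rfl h, Finset.sum_add_distrib]
  have h2 : ∑ d ∈ range N, (if N < 2*d then 1 else 0)
      = ((range N).filter (fun d => N < 2*d)).card := (Finset.card_filter _ _).symm
  have h3 : ((range N).filter (fun d => N < 2*d)) = Finset.Ico (N/2+1) N := by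
    ext d
    simp only [mem_filter, mem_range, Finset.mem_Ico]
    omega
  rw [h2, h3, Nat.card_Ico]
  have h4 : min N (N+1-N) = min N 1 := by congr 1; omega
  rw [h4]
  omega

lemma msum_eq (N : ℕ) : 4 * (∑ d ∈ range N, min d (N-d)) + N % 2 = N * N := by
  induction N with
  | zero => simp
  | succ k ih =>
    rw [msum_step]
    have hk : (k+1) * (k+1) = k*k + 2*k + 1 := by ring
    omega

lemma col_sum (m : ℕ) (a : Fin (m+1)) :
    ∑ b : Fin (m+1), min ((b - a).val) ((a - b).val)
      = ∑ d ∈ range (m+1), min d (m+1-d) := by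
  have key : ∀ c : Fin (m+1),
      min ((a + c - a).val) ((a - (a + c)).val) = min c.val (m+1 - c.val) := by
    intro c
    rw [add_sub_cancel_left, sub_add_cancel_left]
    rcases eq_or_ne c 0 with rfl | hc
    · simp
    · have h0 : (0 : Fin (m+1)) < c := Fin.pos_of_ne_zero hc
      have hneg : (-c).val = (m+1) - (c.val - (0 : Fin (m+1)).val) := by
        rw [← zero_sub]
        exact sub_val₂ _ _ h0
      rw [hneg]
      simp
  calc ∑ b : Fin (m+1), min ((b - a).val) ((a - b).val)
      = ∑ c : Fin (m+1), min ((a + c - a).val) ((a - (a + c)).val) :=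
        (Fintype.sum_equiv (Equiv.addLeft a) _ _ (fun c => rfl)).symm
    _ = ∑ c : Fin (m+1), min c.val (m+1 - c.val) :=
        Finset.sum_congr rfl (fun c _ => key c)
    _ = ∑ d ∈ range (m+1), min d (m+1-d) :=
        Fin.sum_univ_eq_sum_range (fun d => min d (m+1-d)) (m+1)

lemma w_total (m : ℕ) :
    ∑ p : Fin (m+1) × Fin (m+1), min ((p.2 - p.1).val) ((p.1 - p.2).val)
      = (m+1) * ∑ d ∈ range (m+1), min d (m+1-d) := by
  rw [Fintype.sum_prod_type]
  rw [Finset.sum_congr rfl (fun a _ => col_sum m a)]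
  rw [Finset.sum_const, card_univ, Fintype.card_fin, smul_eq_mul]

lemma finRotate_pow_apply (m j : ℕ) (x : Fin (m+1)) :
    ((finRotate (m+1)) ^ j) x = x + (j : Fin (m+1)) := by
  induction j generalizing x with
  | zero => simp
  | succ k ih =>
    rw [pow_succ, Equiv.Perm.mul_apply, finRotate_succ_apply, ih]
    push_cast
    ring

lemma rot_sum (m : ℕ) (f : Fin (m+1) → ℤ) (x : Fin (m+1)) :
    ∑ j ∈ range (m+1), f (((finRotate (m+1)) ^ j) x) = ∑ v : Fin (m+1), f v := by
  have h : ∀ j ∈ range (m+1),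
      f (((finRotate (m+1)) ^ j) x) = f (x + (j : Fin (m+1))) := by
    intro j _; rw [finRotate_pow_apply]
  rw [Finset.sum_congr rfl h]
  refine Finset.sum_nbij' (fun j => x + (j : Fin (m+1))) (fun v => ((v - x) : Fin (m+1)).val)
    ?_ ?_ ?_ ?_ ?_
  · intro j _; exact mem_univ _
  · intro v _; exact mem_range.mpr (v - x).isLt
  · intro j hj
    show ((x + (j : Fin (m+1))) - x).val = j
    rw [add_sub_cancel_left, Fin.val_cast_of_lt (mem_range.mp hj)]
  · intro v _
    show x + (((v - x).val : Fin (m+1))) = v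
    have h1 : (((v - x).val : Fin (m+1))) = v - x := Fin.cast_val_eq_self _
    rw [h1]; abel
  · intro j _; rfl

end DiamAux

open DiamAux in
theorem diameter_upper {n : ℕ} (hn : 0 < n) (π₁ π₂ : Equiv.Perm (Fin n)) :
    ∃ j < n, 8 * (inversions (π₁ * (finRotate n) ^ j * π₂⁻¹) : ℤ)
      ≤ 3 * n ^ 2 - 4 * n + 1 := by
  obtain ⟨m, rfl⟩ : ∃ m, n = m + 1 := ⟨n - 1, by omega⟩
  set A : ℤ := ((m : ℤ) + 1) with hA
  -- the symmetric weight function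
  set gM : Fin (m+1) × Fin (m+1) → ℤ :=
    fun q => max |(q.1.val : ℤ) - q.2.val| (A - |(q.1.val : ℤ) - q.2.val|) with hgM
  have hgMsymm : ∀ a b : Fin (m+1), gM (a, b) = gM (b, a) := by
    intro a b; simp only [hgM]; rw [abs_sub_comm]
  set Vz : ℤ := ∑ p ∈ PP (m+1), gM p with hVz
  set D : Equiv.Perm (Fin (m+1)) → ℤ :=
    fun τ => ∑ p ∈ PP (m+1), (((τ p.1).val : ℤ) - ((τ p.2).val : ℤ)) with hD
  -- Step A : pointwise bound for any permutation
  have stepA : ∀ τ : Equiv.Perm (Fin (m+1)), A * inversions τ ≤ Vz + D τ := by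
    intro τ
    have hcard : (inversions τ : ℤ)
        = ∑ p ∈ PP (m+1), (if τ p.2 < τ p.1 then (1 : ℤ) else 0) := by
      unfold inversions
      rw [← Finset.filter_filter, Finset.card_filter]
      push_cast
      rfl
    have hmul : A * inversions τ
        = ∑ p ∈ PP (m+1), (if τ p.2 < τ p.1 then A else 0) := by
      rw [hcard, Finset.mul_sum]
      apply Finset.sum_congr rfl
      intro p _
      rw [mul_ite, mul_one, mul_zero]
    rw [hmul]
    have hle : ∑ p ∈ PP (m+1), (if τ p.2 < τ p.1 then A else 0)
        ≤ ∑ p ∈ PP (m+1),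
            (gM (τ p.1, τ p.2) + (((τ p.1).val : ℤ) - ((τ p.2).val : ℤ))) := by
      apply Finset.sum_le_sum
      intro p hp
      have hplt : p.1 < p.2 := by
        simp only [PP, mem_filter, mem_univ, true_and] at hp
        exact hp
      have hne : τ p.1 ≠ τ p.2 := fun h => (ne_of_lt hplt) (τ.injective h)
      have hvne : ((τ p.1).val : ℤ) ≠ ((τ p.2).val : ℤ) := by
        intro h
        exact hne (Fin.ext (by exact_mod_cast h))
      set x : ℤ := ((τ p.1).val : ℤ)
      set y : ℤ := ((τ p.2).val : ℤ)
      have hiff : τ p.2 < τ p.1 ↔ y < x := by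
        rw [Fin.lt_def]
        exact Iff.symm Nat.cast_lt
      simp only [hgM]
      split_ifs with h
      · have hyx : y < x := hiff.mp h
        have habs : |x - y| = x - y := abs_of_pos (by linarith)
        rw [habs]
        have := le_max_right (x - y) (A - (x - y))
        linarith
      · have hxy : x < y := lt_of_le_of_ne (not_lt.mp (fun hc => h (hiff.mpr hc))) hvne
        have habs : |x - y| = y - x := by rw [abs_sub_comm]; exact abs_of_pos (by linarith)
        rw [habs]
        have := le_max_left (y - x) (A - (y - x))
        linarith
    refine le_trans hle ?_
    rw [Finset.sum_add_distrib]
    have hre : ∑ p ∈ PP (m+1), gM (τ p.1, τ p.2) = Vz :=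
      perm_reindex τ gM hgMsymm
    rw [hre]
  -- Step B : rotation sums of D vanish
  have stepB : ∑ j ∈ range (m+1), D (π₁ * (finRotate (m+1)) ^ j * π₂⁻¹) = 0 := by
    simp only [hD]
    rw [Finset.sum_comm]
    apply Finset.sum_eq_zero
    intro p _
    have happ : ∀ (j : ℕ) (z : Fin (m+1)),
        (π₁ * (finRotate (m+1)) ^ j * π₂⁻¹) z
          = π₁ (((finRotate (m+1)) ^ j) (π₂⁻¹ z)) := fun j z => rfl
    have e1 : ∀ z : Fin (m+1), ∑ j ∈ range (m+1),
        (((π₁ * (finRotate (m+1)) ^ j * π₂⁻¹) z).val : ℤ)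
          = ∑ v : Fin (m+1), ((π₁ v).val : ℤ) := by
      intro z
      rw [Finset.sum_congr rfl (fun j _ => by rw [happ j z])]
      exact rot_sum m (fun v => ((π₁ v).val : ℤ)) (π₂⁻¹ z)
    rw [Finset.sum_sub_distrib, e1 p.1, e1 p.2, sub_self]
  -- Step C : averaging over rotations
  have havg : ∃ j ∈ range (m+1),
      A * inversions (π₁ * (finRotate (m+1)) ^ j * π₂⁻¹) ≤ Vz := by
    apply Finset.exists_le_of_sum_le (by exact ⟨0, mem_range.mpr (Nat.succ_pos m)⟩)
    calc ∑ j ∈ range (m+1), A * inversions (π₁ * (finRotate (m+1)) ^ j * π₂⁻¹)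
        ≤ ∑ j ∈ range (m+1), (Vz + D (π₁ * (finRotate (m+1)) ^ j * π₂⁻¹)) :=
          Finset.sum_le_sum (fun j _ => stepA _)
      _ = ∑ j ∈ range (m+1), Vz := by
          rw [Finset.sum_add_distrib, stepB, add_zero]
  obtain ⟨j, hjmem, hjle⟩ := havg
  refine ⟨j, mem_range.mp hjmem, ?_⟩
  -- Step D : the exact bound on Vz
  set K : ℕ := ∑ d ∈ range (m+1), min d (m+1-d) with hK
  set W : ℕ := ∑ p ∈ PP (m+1), min ((p.2 - p.1).val) ((p.1 - p.2).val) with hW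
  set CP : ℕ := (PP (m+1)).card with hCP
  have h5 : 2 * CP + (m+1) = (m+1) * (m+1) := by
    have := pairs_symm_sum (n := m+1) (fun _ : Fin (m+1) × Fin (m+1) => (1 : ℕ))
      (fun a b => rfl)
    simp only [Finset.sum_const, smul_eq_mul, mul_one, card_univ, Fintype.card_prod,
      Fintype.card_fin] at this
    rw [← hCP] at this
    omega
  have h6 : 2 * W = (m+1) * K := by
    have hsym : ∀ a b : Fin (m+1),
        min ((b - a).val) ((a - b).val) = min ((a - b).val) ((b - a).val) :=
      fun a b => min_comm _ _
    have := pairs_symm_sum (n := m+1)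
      (fun p : Fin (m+1) × Fin (m+1) => min ((p.2 - p.1).val) ((p.1 - p.2).val))
      (fun a b => hsym a b)
    have hdiag : ∑ a : Fin (m+1), min ((a - a).val) ((a - a).val) = 0 := by
      apply Finset.sum_eq_zero
      intro a _
      simp
    rw [w_total m, hdiag, add_zero, ← hK, ← hW] at this
    omega
  have h7 : 4 * K + (m+1) % 2 = (m+1) * (m+1) := msum_eq (m+1)
  have h8 : Vz + (W : ℤ) = A * CP := by
    have hterm : ∀ p ∈ PP (m+1),
        gM p = A - ((min ((p.2 - p.1).val) ((p.1 - p.2).val) : ℕ) : ℤ) := by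
      intro p hp
      have hplt : p.1 < p.2 := by
        simp only [PP, mem_filter, mem_univ, true_and] at hp
        exact hp
      have hvlt : p.1.val < p.2.val := hplt
      have h2lt := p.2.isLt
      set d : ℕ := p.2.val - p.1.val with hd
      have hd1 : (p.2 - p.1).val = d := sub_val₁ _ _ hplt
      have hd2 : (p.1 - p.2).val = (m+1) - d := sub_val₂ _ _ hplt
      have habs : |(p.1.val : ℤ) - p.2.val| = (d : ℤ) := by
        rw [abs_sub_comm, abs_of_pos (by omega)]
        omega
      simp only [hgM, habs, hd1, hd2]
      rcases le_total d ((m+1) - d) with hle | hle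
      · rw [min_eq_left hle, max_eq_right (by omega)]
      · rw [min_eq_right hle, max_eq_left (by omega)]
        omega
    rw [hVz, Finset.sum_congr rfl hterm, Finset.sum_sub_distrib, Finset.sum_const,
      nsmul_eq_mul, ← Nat.cast_sum, ← hW, ← hCP]
    ring
  -- combine arithmetic
  have hAeq : A = ((m+1 : ℕ) : ℤ) := by push_cast [hA]; ring
  have e1 : 2 * (CP : ℤ) + A = A * A := by
    rw [hAeq]; exact_mod_cast h5
  have e2 : 2 * (W : ℤ) = A * K := by
    rw [hAeq]; exact_mod_cast h6
  have e3 : 4 * (K : ℤ) + ((m+1) % 2 : ℕ) = A * A := by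
    rw [hAeq]; exact_mod_cast h7
  have hr0 : (0 : ℤ) ≤ ((m+1) % 2 : ℕ) := by positivity
  have hr1 : (((m+1) % 2 : ℕ) : ℤ) ≤ 1 := by
    have : (m+1) % 2 ≤ 1 := by omega
    exact_mod_cast this
  have hApos : (0 : ℤ) < A := by rw [hA]; positivity
  have e1' : 2 * (A * CP) = A * A * A - A * A := by linear_combination A * e1
  have e3' : 4 * (A * K) + A * ((m+1) % 2 : ℕ) = A * A * A := by linear_combination A * e3
  have har : A * ((m+1) % 2 : ℕ) ≤ A := by
    calc A * ((m+1) % 2 : ℕ) ≤ A * 1 := by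
          apply mul_le_mul_of_nonneg_left hr1 (le_of_lt hApos)
      _ = A := mul_one A
  have h9 : 8 * Vz ≤ A * (3 * A ^ 2 - 4 * A + 1) := by nlinarith [e1', e3', e2, h8, har]
  have h10 : A * (8 * (inversions (π₁ * (finRotate (m+1)) ^ j * π₂⁻¹) : ℤ))
      ≤ A * (3 * A ^ 2 - 4 * A + 1) := by
    calc A * (8 * (inversions (π₁ * (finRotate (m+1)) ^ j * π₂⁻¹) : ℤ))
        = 8 * (A * inversions (π₁ * (finRotate (m+1)) ^ j * π₂⁻¹)) := by ring
      _ ≤ 8 * Vz := by linarith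
      _ ≤ A * (3 * A ^ 2 - 4 * A + 1) := h9
  have h11 := le_of_mul_le_mul_left h10 hApos
  rw [hAeq] at h11
  push_cast at h11 ⊢
  linarith
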